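/- For every n ≥ 1, every model f : (Fin n → ℝ) → ℝ, and all points x, r ∈ ℝⁿ, the interventional Shapley attributions satisfy the efficiency axiom: ∑_{i ∈ Fin n} BS_i(f,x,r) = f(x) − f(r). -/

import Mathlib

def patch {n : ℕ} (x r : Fin n → ℝ) (S : Finset (Fin n)) : Fin n → ℝ :=
  fun j => if j ∈ S then x j else r j

noncomputable def BS {n : ℕ} (f : (Fin n → ℝ) → ℝ) (x r : Fin n → ℝ) (i : Fin n) : ℝ :=
  ∑ S ∈ (Finset.univ.erase i).powerset,
    ((S.card.factorial * (n - S.card - 1).factorial : ℝ) / (n.factorial : ℝ)) *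
      (f (patch x r (insert i S)) - f (patch x r S))

open Finset

theorem BS_efficiency (n : ℕ) (hn : 1 ≤ n) (f : (Fin n → ℝ) → ℝ) (x r : Fin n → ℝ) :
    ∑ i, BS f x r i = f x - f r := by
  classical
  set w : ℕ → ℝ := fun k =>
    (k.factorial * (n - k - 1).factorial : ℝ) / (n.factorial : ℝ) with hw
  have key : ∀ i : Fin n, BS f x r i
      = ∑ T ∈ (univ : Finset (Fin n)).powerset,
          (if i ∈ T then w (T.card - 1) else -(w T.card)) * f (patch x r T) := by
    intro i
    have hins : (univ : Finset (Fin n)) = insert i (univ.erase i) :=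
      (insert_erase (mem_univ i)).symm
    rw [hins, Finset.sum_powerset_insert (notMem_erase i univ)]
    rw [BS, ← Finset.sum_add_distrib]
    refine Finset.sum_congr rfl ?_
    intro S hS
    have hiS : i ∉ S := fun h => (notMem_erase i univ) ((mem_powerset.1 hS) h)
    have hcard : (insert i S).card = S.card + 1 := Finset.card_insert_of_notMem hiS
    rw [if_neg hiS, if_pos (mem_insert_self i S), hcard]
    simp only [Nat.add_sub_cancel]
    ring
  rw [Finset.sum_congr rfl (fun i _ => key i), Finset.sum_comm]
  have inner : ∀ T ∈ (univ : Finset (Fin n)).powerset,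
      (∑ i : Fin n, (if i ∈ T then w (T.card - 1) else -(w T.card)) * f (patch x r T))
      = ((T.card : ℝ) * w (T.card - 1) - ((n - T.card : ℕ) : ℝ) * w T.card) * f (patch x r T) := by
    intro T _
    rw [← Finset.sum_mul, Finset.sum_ite, Finset.sum_const, Finset.sum_const]
    have h1 : (univ.filter (· ∈ T)) = T := by
      ext j; simp
    have h2 : (univ.filter (¬ · ∈ T)).card = n - T.card := by
      rw [Finset.filter_not, Finset.card_sdiff_of_subset (by simp)]
      simp [Fintype.card_fin]
    rw [h1, h2]
    simp only [nsmul_eq_mul, mul_neg]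
    ring
  rw [Finset.sum_congr rfl inner]
  -- now evaluate the coefficients
  have hzero : ∀ T ∈ (univ : Finset (Fin n)).powerset, T ∉ ({univ, ∅} : Finset (Finset (Fin n))) →
      ((T.card : ℝ) * w (T.card - 1) - ((n - T.card : ℕ) : ℝ) * w T.card) * f (patch x r T) = 0 := by
    intro T _ hT
    simp only [mem_insert, mem_singleton, not_or] at hT
    obtain ⟨hTu, hTe⟩ := hT
    set k := T.card with hk
    have hk0 : 0 < k := Finset.card_pos.2 (Finset.nonempty_iff_ne_empty.2 hTe)
    have hkn : k < n := by
      have := Finset.card_lt_card (Finset.ssubset_univ_iff.2 hTu)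
      simpa [Fintype.card_fin] using this
    have hnat : k * ((k - 1).factorial * (n - (k - 1) - 1).factorial)
        = (n - k) * (k.factorial * (n - k - 1).factorial) := by
      have e1 : n - (k - 1) - 1 = n - k := by omega
      rw [e1, ← Nat.mul_factorial_pred hk0.ne', ← Nat.mul_factorial_pred (show n - k ≠ 0 by omega)]
      ring
    have hcast : (k : ℝ) * ((k - 1).factorial * (n - (k - 1) - 1).factorial)
        = ((n - k : ℕ) : ℝ) * (k.factorial * (n - k - 1).factorial) := by
      exact_mod_cast congrArg (Nat.cast : ℕ → ℝ) hnat
    have : (k : ℝ) * w (k - 1) - ((n - k : ℕ) : ℝ) * w k = 0 := by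
      rw [hw]
      simp only
      field_simp
      linarith [hcast]
    rw [this, zero_mul]
  have huniv_mem : (univ : Finset (Fin n)) ∈ (univ : Finset (Fin n)).powerset := by simp
  have hempty_mem : (∅ : Finset (Fin n)) ∈ (univ : Finset (Fin n)).powerset := by simp
  have hsub : ({univ, ∅} : Finset (Finset (Fin n))) ⊆ (univ : Finset (Fin n)).powerset := by
    intro T hT
    simp only [mem_insert, mem_singleton] at hT
    rcases hT with h | h <;> simp [h]
  rw [← Finset.sum_subset hsub (fun T hT hT2 => hzero T hT hT2)]
  have hne : (univ : Finset (Fin n)) ≠ (∅ : Finset (Fin n)) := by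
    intro h
    have : (univ : Finset (Fin n)).card = 0 := by rw [h]; simp
    rw [Finset.card_univ, Fintype.card_fin] at this
    omega
  rw [Finset.sum_pair hne]
  have hpu : patch x r (univ : Finset (Fin n)) = x := by
    funext j; simp [patch]
  have hpe : patch x r (∅ : Finset (Fin n)) = r := by
    funext j; simp [patch]
  have hcu : (univ : Finset (Fin n)).card = n := by simp
  have hce : (∅ : Finset (Fin n)).card = 0 := by simp
  rw [hpu, hpe, hcu, hce]
  have hfne : ((n.factorial : ℝ)) ≠ 0 := by
    exact_mod_cast Nat.factorial_ne_zero n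
  have c1 : (n : ℝ) * w (n - 1) - ((n - n : ℕ) : ℝ) * w n = 1 := by
    rw [hw]
    simp only [Nat.sub_self, Nat.cast_zero, zero_mul, sub_zero]
    have e1 : n - (n - 1) - 1 = 0 := by omega
    rw [e1]
    have : (n : ℝ) * (n - 1).factorial = n.factorial := by
      exact_mod_cast congrArg (Nat.cast : ℕ → ℝ) (Nat.mul_factorial_pred (Nat.one_le_iff_ne_zero.mp hn))
    simp [Nat.factorial_zero]
    field_simp
    linarith [this]
  have c0 : ((0 : ℕ) : ℝ) * w (0 - 1) - ((n - 0 : ℕ) : ℝ) * w 0 = -1 := by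
    rw [hw]
    simp only [Nat.sub_zero, zero_mul, zero_sub]
    have : (n : ℝ) * (n - 1).factorial = n.factorial := by
      exact_mod_cast congrArg (Nat.cast : ℕ → ℝ) (Nat.mul_factorial_pred (Nat.one_le_iff_ne_zero.mp hn))
    simp [Nat.factorial_zero]
    field_simp
    linarith [this]
  rw [c1, c0]
  ring
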